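/- Let n, k, t be integers with 1 < t ≤ k/4 - 2 and n ≥ 2k + 14t. Then C(n-k-2, k-2) ≥ C(k, t)·(C(n-k-1, t) + C(n-k+t+1, t+2)). -/

import Mathlib

private lemma topstep (a b c a1 : ℕ) (ha1 : a1 = a + 1) (h : b + c = a1) :
    a1.choose b * c = a.choose b * a1 := by
  subst ha1
  have h1 := Nat.add_one_mul_choose_eq a b
  have h2 := Nat.choose_succ_right_eq (a+1) b
  have h3 : a + 1 - b = c := by omega
  calc (a+1).choose b * c = (a+1).choose b * (a+1-b) := by rw [h3]
    _ = (a+1).choose (b+1) * (b+1) := h2.symm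
    _ = (a+1) * a.choose b := h1.symm
    _ = a.choose b * (a+1) := by ring

private lemma botstep (a b c b1 : ℕ) (hb1 : b1 = b + 1) (h : b + c = a) :
    a.choose b1 * b1 = a.choose b * c := by
  subst hb1
  rw [Nat.choose_succ_right_eq]
  congr 1
  omega

private lemma cid (a b c : ℕ) (h : b + c ≤ a) :
    a.choose (b+c) * (b+c).choose b = a.choose b * (a-b).choose c := by
  have hb : b ≤ a := by omega
  have hc : c ≤ a - b := by omega
  have h1 : (b+c).choose b * b.factorial * c.factorial = (b+c).factorial := by
    have := Nat.choose_mul_factorial_mul_factorial (Nat.le_add_right b c)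
    rwa [Nat.add_sub_cancel_left] at this
  have h2 := Nat.choose_mul_factorial_mul_factorial h
  have h3 := Nat.choose_mul_factorial_mul_factorial hc
  have h4 := Nat.choose_mul_factorial_mul_factorial hb
  have h5 : a - b - c = a - (b+c) := by omega
  have hpos : 0 < b.factorial * c.factorial * (a-(b+c)).factorial :=
    Nat.mul_pos (Nat.mul_pos (Nat.factorial_pos b) (Nat.factorial_pos c)) (Nat.factorial_pos _)
  refine Nat.eq_of_mul_eq_mul_right hpos ?_
  calc a.choose (b+c) * (b+c).choose b * (b.factorial * c.factorial * (a-(b+c)).factorial)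
      = a.choose (b+c) * ((b+c).choose b * b.factorial * c.factorial) * (a-(b+c)).factorial := by ring
    _ = a.choose (b+c) * (b+c).factorial * (a-(b+c)).factorial := by rw [h1]
    _ = a.factorial := h2
    _ = a.choose b * b.factorial * (a-b).factorial := h4.symm
    _ = a.choose b * b.factorial * ((a-b).choose c * c.factorial * (a-b-c).factorial) := by rw [h3]
    _ = a.choose b * (a-b).choose c * (b.factorial * c.factorial * (a-b-c).factorial) := by ring
    _ = a.choose b * (a-b).choose c * (b.factorial * c.factorial * (a-(b+c)).factorial) := by rw [h5]

private lemma choose_mono_mid_aux (n : ℕ) : ∀ (d r : ℕ), 2*(r+d) ≤ n → n.choose r ≤ n.choose (r+d) := by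
  intro d
  induction d with
  | zero => intro r _; simp
  | succ d ihd =>
    intro r h
    calc n.choose r ≤ n.choose (r+d) := ihd r (by omega)
      _ ≤ n.choose (r+d+1) := Nat.choose_le_succ_of_lt_half_left (by omega)

private lemma choose_mono_mid {n r s : ℕ} (h1 : r ≤ s) (h2 : s ≤ n - r) :
    n.choose r ≤ n.choose s := by
  rcases le_or_gt (2*s) n with hs | hs
  · have := choose_mono_mid_aux n (s-r) r (by omega)
    rwa [show r+(s-r) = s by omega] at this
  · have hsn : s ≤ n := by omega
    have := choose_mono_mid_aux n ((n-s)-r) r (by omega)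
    rw [show r+((n-s)-r) = n-s by omega] at this
    rwa [Nat.choose_symm hsn] at this

private lemma desc_scaled (p q : ℕ) : ∀ (b a c : ℕ), (∀ i, i < b → p * (a - i) ≤ q * (c - i)) →
    p^b * a.descFactorial b ≤ q^b * c.descFactorial b := by
  intro b
  induction b with
  | zero => intro a c _; simp
  | succ b ih =>
    intro a c h
    rw [Nat.descFactorial_succ, Nat.descFactorial_succ, pow_succ, pow_succ]
    calc p^b*p*((a-b)*a.descFactorial b) = (p*(a-b))*(p^b*a.descFactorial b) := by ring
      _ ≤ (q*(c-b))*(q^b*c.descFactorial b) :=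
          Nat.mul_le_mul (h b (Nat.lt_succ_self b)) (ih a c (fun i hi => h i (hi.trans (Nat.lt_succ_self b))))
      _ = q^b*q*((c-b)*c.descFactorial b) := by ring

private lemma choose_scaled (p q b a c : ℕ) (h : ∀ i, i < b → p * (a - i) ≤ q * (c - i)) :
    p^b * a.choose b ≤ q^b * c.choose b := by
  have hd := desc_scaled p q b a c h
  rw [Nat.descFactorial_eq_factorial_mul_choose, Nat.descFactorial_eq_factorial_mul_choose] at hd
  refine Nat.le_of_mul_le_mul_left ?_ (Nat.factorial_pos b)
  calc b.factorial * (p^b * a.choose b) = p^b * (b.factorial * a.choose b) := by ring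
    _ ≤ q^b * (b.factorial * c.choose b) := hd
    _ = b.factorial * (q^b * c.choose b) := by ring

set_option maxHeartbeats 1000000 in
private lemma keyG (t : ℕ) (ht : 2 ≤ t) :
    2^(t+1) * 6^(t+2) * (3*t+6).choose (t+2) * (2*t+4).choose t ≤ 5^(2*t+2) * (15*t+4).choose (t+4) := by
  induction t, ht using Nat.le_induction with
  | base =>
    have c1 : Nat.choose 12 4 = 495 := by decide
    have c2 : Nat.choose 8 2 = 28 := by decide
    have c3 : Nat.choose 34 6 = 1344904 := by
      rw [Nat.choose_eq_descFactorial_div_factorial]; decide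
    norm_num [c1, c2, c3]
  | succ t ht ih =>
    rw [show 3*(t+1)+6 = 3*t+9 by ring, show 2*(t+1)+4 = 2*t+6 by ring,
        show 15*(t+1)+4 = 15*t+19 by ring, show t+1+2 = t+3 by ring,
        show t+1+4 = t+5 by ring, show t+1+1 = t+2 by ring, show 2*(t+1)+2 = 2*t+4 by ring]
    have b1 : (3*t+9).choose (t+3) * (t+3) = (3*t+9).choose (t+2) * (2*t+7) := botstep (3*t+9) (t+2) (2*t+7) (t+3) (by ring) (by ring)
    have u3 : (3*t+9).choose (t+2) * (2*t+7) = (3*t+8).choose (t+2) * (3*t+9) := topstep (3*t+8) (t+2) (2*t+7) (3*t+9) (by ring) (by ring)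
    have u2 : (3*t+8).choose (t+2) * (2*t+6) = (3*t+7).choose (t+2) * (3*t+8) := topstep (3*t+7) (t+2) (2*t+6) (3*t+8) (by ring) (by ring)
    have u1 : (3*t+7).choose (t+2) * (2*t+5) = (3*t+6).choose (t+2) * (3*t+7) := topstep (3*t+6) (t+2) (2*t+5) (3*t+7) (by ring) (by ring)
    have hi : (3*t+9).choose (t+3) * ((t+3)*((2*t+5)*(2*t+6))) = (3*t+6).choose (t+2) * ((3*t+7)*((3*t+8)*(3*t+9))) := by
      calc (3*t+9).choose (t+3) * ((t+3)*((2*t+5)*(2*t+6)))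
          _ = ((3*t+9).choose (t+3) * (t+3)) * ((2*t+5)*(2*t+6)) := by ring
          _ = ((3*t+9).choose (t+2) * (2*t+7)) * ((2*t+5)*(2*t+6)) := by rw [b1]
          _ = ((3*t+8).choose (t+2) * (3*t+9)) * ((2*t+5)*(2*t+6)) := by rw [u3]
          _ = ((3*t+8).choose (t+2) * (2*t+6)) * ((2*t+5)*(3*t+9)) := by ring
          _ = ((3*t+7).choose (t+2) * (3*t+8)) * ((2*t+5)*(3*t+9)) := by rw [u2]
          _ = ((3*t+7).choose (t+2) * (2*t+5)) * ((3*t+8)*(3*t+9)) := by ring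
          _ = ((3*t+6).choose (t+2) * (3*t+7)) * ((3*t+8)*(3*t+9)) := by rw [u1]
          _ = (3*t+6).choose (t+2) * ((3*t+7)*((3*t+8)*(3*t+9))) := by ring
    have b2 : (2*t+6).choose (t+1) * (t+1) = (2*t+6).choose t * (t+6) := botstep (2*t+6) t (t+6) (t+1) (by ring) (by ring)
    have v2 : (2*t+6).choose t * (t+6) = (2*t+5).choose t * (2*t+6) := topstep (2*t+5) t (t+6) (2*t+6) (by ring) (by ring)
    have v1 : (2*t+5).choose t * (t+5) = (2*t+4).choose t * (2*t+5) := topstep (2*t+4) t (t+5) (2*t+5) (by ring) (by ring)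
    have hii : (2*t+6).choose (t+1) * ((t+1)*(t+5)) = (2*t+4).choose t * ((2*t+5)*(2*t+6)) := by
      calc (2*t+6).choose (t+1) * ((t+1)*(t+5))
          _ = ((2*t+6).choose (t+1) * (t+1)) * (t+5) := by ring
          _ = ((2*t+6).choose t * (t+6)) * (t+5) := by rw [b2]
          _ = ((2*t+5).choose t * (2*t+6)) * (t+5) := by rw [v2]
          _ = ((2*t+5).choose t * (t+5)) * (2*t+6) := by ring
          _ = ((2*t+4).choose t * (2*t+5)) * (2*t+6) := by rw [v1]
          _ = (2*t+4).choose t * ((2*t+5)*(2*t+6)) := by ring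
    have hiii : (15*t+19).choose (t+5) * ((t+5) * ((14*t+1)*(14*t+2)*(14*t+3)*(14*t+4)*(14*t+5)*(14*t+6)*(14*t+7)*(14*t+8)*(14*t+9)*(14*t+10)*(14*t+11)*(14*t+12)*(14*t+13)*(14*t+14))) = (15*t+4).choose (t+4) * ((15*t+5)*(15*t+6)*(15*t+7)*(15*t+8)*(15*t+9)*(15*t+10)*(15*t+11)*(15*t+12)*(15*t+13)*(15*t+14)*(15*t+15)*(15*t+16)*(15*t+17)*(15*t+18)*(15*t+19)) := by
      have eb : (15*t+19).choose (t+5) * (t+5) = (15*t+19).choose (t+4) * (14*t+15) := botstep (15*t+19) (t+4) (14*t+15) (t+5) (by ring) (by ring)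
      have e14 : (15*t+19).choose (t+4) * (14*t+15) = (15*t+18).choose (t+4) * (15*t+19) := topstep (15*t+18) (t+4) (14*t+15) (15*t+19) (by ring) (by ring)
      have e13 : (15*t+18).choose (t+4) * (14*t+14) = (15*t+17).choose (t+4) * (15*t+18) := topstep (15*t+17) (t+4) (14*t+14) (15*t+18) (by ring) (by ring)
      have e12 : (15*t+17).choose (t+4) * (14*t+13) = (15*t+16).choose (t+4) * (15*t+17) := topstep (15*t+16) (t+4) (14*t+13) (15*t+17) (by ring) (by ring)
      have e11 : (15*t+16).choose (t+4) * (14*t+12) = (15*t+15).choose (t+4) * (15*t+16) := topstep (15*t+15) (t+4) (14*t+12) (15*t+16) (by ring) (by ring)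
      have e10 : (15*t+15).choose (t+4) * (14*t+11) = (15*t+14).choose (t+4) * (15*t+15) := topstep (15*t+14) (t+4) (14*t+11) (15*t+15) (by ring) (by ring)
      have e9 : (15*t+14).choose (t+4) * (14*t+10) = (15*t+13).choose (t+4) * (15*t+14) := topstep (15*t+13) (t+4) (14*t+10) (15*t+14) (by ring) (by ring)
      have e8 : (15*t+13).choose (t+4) * (14*t+9) = (15*t+12).choose (t+4) * (15*t+13) := topstep (15*t+12) (t+4) (14*t+9) (15*t+13) (by ring) (by ring)
      have e7 : (15*t+12).choose (t+4) * (14*t+8) = (15*t+11).choose (t+4) * (15*t+12) := topstep (15*t+11) (t+4) (14*t+8) (15*t+12) (by ring) (by ring)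
      have e6 : (15*t+11).choose (t+4) * (14*t+7) = (15*t+10).choose (t+4) * (15*t+11) := topstep (15*t+10) (t+4) (14*t+7) (15*t+11) (by ring) (by ring)
      have e5 : (15*t+10).choose (t+4) * (14*t+6) = (15*t+9).choose (t+4) * (15*t+10) := topstep (15*t+9) (t+4) (14*t+6) (15*t+10) (by ring) (by ring)
      have e4 : (15*t+9).choose (t+4) * (14*t+5) = (15*t+8).choose (t+4) * (15*t+9) := topstep (15*t+8) (t+4) (14*t+5) (15*t+9) (by ring) (by ring)
      have e3 : (15*t+8).choose (t+4) * (14*t+4) = (15*t+7).choose (t+4) * (15*t+8) := topstep (15*t+7) (t+4) (14*t+4) (15*t+8) (by ring) (by ring)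
      have e2 : (15*t+7).choose (t+4) * (14*t+3) = (15*t+6).choose (t+4) * (15*t+7) := topstep (15*t+6) (t+4) (14*t+3) (15*t+7) (by ring) (by ring)
      have e1 : (15*t+6).choose (t+4) * (14*t+2) = (15*t+5).choose (t+4) * (15*t+6) := topstep (15*t+5) (t+4) (14*t+2) (15*t+6) (by ring) (by ring)
      have e0 : (15*t+5).choose (t+4) * (14*t+1) = (15*t+4).choose (t+4) * (15*t+5) := topstep (15*t+4) (t+4) (14*t+1) (15*t+5) (by ring) (by ring)
      calc (15*t+19).choose (t+5) * ((t+5) * ((14*t+1)*(14*t+2)*(14*t+3)*(14*t+4)*(14*t+5)*(14*t+6)*(14*t+7)*(14*t+8)*(14*t+9)*(14*t+10)*(14*t+11)*(14*t+12)*(14*t+13)*(14*t+14)))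
          _ = ((15*t+19).choose (t+5) * (t+5)) * ((14*t+1)*(14*t+2)*(14*t+3)*(14*t+4)*(14*t+5)*(14*t+6)*(14*t+7)*(14*t+8)*(14*t+9)*(14*t+10)*(14*t+11)*(14*t+12)*(14*t+13)*(14*t+14)) := by ring
          _ = ((15*t+19).choose (t+4) * (14*t+15)) * ((14*t+1)*(14*t+2)*(14*t+3)*(14*t+4)*(14*t+5)*(14*t+6)*(14*t+7)*(14*t+8)*(14*t+9)*(14*t+10)*(14*t+11)*(14*t+12)*(14*t+13)*(14*t+14)) := by rw [eb]
          _ = ((15*t+18).choose (t+4) * (15*t+19)) * ((14*t+1)*(14*t+2)*(14*t+3)*(14*t+4)*(14*t+5)*(14*t+6)*(14*t+7)*(14*t+8)*(14*t+9)*(14*t+10)*(14*t+11)*(14*t+12)*(14*t+13)*(14*t+14)) := by rw [e14]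
          _ = ((15*t+18).choose (t+4) * (14*t+14)) * ((14*t+1)*(14*t+2)*(14*t+3)*(14*t+4)*(14*t+5)*(14*t+6)*(14*t+7)*(14*t+8)*(14*t+9)*(14*t+10)*(14*t+11)*(14*t+12)*(14*t+13)*(15*t+19)) := by ring
          _ = ((15*t+17).choose (t+4) * (15*t+18)) * ((14*t+1)*(14*t+2)*(14*t+3)*(14*t+4)*(14*t+5)*(14*t+6)*(14*t+7)*(14*t+8)*(14*t+9)*(14*t+10)*(14*t+11)*(14*t+12)*(14*t+13)*(15*t+19)) := by rw [e13]
          _ = ((15*t+17).choose (t+4) * (14*t+13)) * ((14*t+1)*(14*t+2)*(14*t+3)*(14*t+4)*(14*t+5)*(14*t+6)*(14*t+7)*(14*t+8)*(14*t+9)*(14*t+10)*(14*t+11)*(14*t+12)*(15*t+18)*(15*t+19)) := by ring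
          _ = ((15*t+16).choose (t+4) * (15*t+17)) * ((14*t+1)*(14*t+2)*(14*t+3)*(14*t+4)*(14*t+5)*(14*t+6)*(14*t+7)*(14*t+8)*(14*t+9)*(14*t+10)*(14*t+11)*(14*t+12)*(15*t+18)*(15*t+19)) := by rw [e12]
          _ = ((15*t+16).choose (t+4) * (14*t+12)) * ((14*t+1)*(14*t+2)*(14*t+3)*(14*t+4)*(14*t+5)*(14*t+6)*(14*t+7)*(14*t+8)*(14*t+9)*(14*t+10)*(14*t+11)*(15*t+17)*(15*t+18)*(15*t+19)) := by ring
          _ = ((15*t+15).choose (t+4) * (15*t+16)) * ((14*t+1)*(14*t+2)*(14*t+3)*(14*t+4)*(14*t+5)*(14*t+6)*(14*t+7)*(14*t+8)*(14*t+9)*(14*t+10)*(14*t+11)*(15*t+17)*(15*t+18)*(15*t+19)) := by rw [e11]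
          _ = ((15*t+15).choose (t+4) * (14*t+11)) * ((14*t+1)*(14*t+2)*(14*t+3)*(14*t+4)*(14*t+5)*(14*t+6)*(14*t+7)*(14*t+8)*(14*t+9)*(14*t+10)*(15*t+16)*(15*t+17)*(15*t+18)*(15*t+19)) := by ring
          _ = ((15*t+14).choose (t+4) * (15*t+15)) * ((14*t+1)*(14*t+2)*(14*t+3)*(14*t+4)*(14*t+5)*(14*t+6)*(14*t+7)*(14*t+8)*(14*t+9)*(14*t+10)*(15*t+16)*(15*t+17)*(15*t+18)*(15*t+19)) := by rw [e10]
          _ = ((15*t+14).choose (t+4) * (14*t+10)) * ((14*t+1)*(14*t+2)*(14*t+3)*(14*t+4)*(14*t+5)*(14*t+6)*(14*t+7)*(14*t+8)*(14*t+9)*(15*t+15)*(15*t+16)*(15*t+17)*(15*t+18)*(15*t+19)) := by ring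
          _ = ((15*t+13).choose (t+4) * (15*t+14)) * ((14*t+1)*(14*t+2)*(14*t+3)*(14*t+4)*(14*t+5)*(14*t+6)*(14*t+7)*(14*t+8)*(14*t+9)*(15*t+15)*(15*t+16)*(15*t+17)*(15*t+18)*(15*t+19)) := by rw [e9]
          _ = ((15*t+13).choose (t+4) * (14*t+9)) * ((14*t+1)*(14*t+2)*(14*t+3)*(14*t+4)*(14*t+5)*(14*t+6)*(14*t+7)*(14*t+8)*(15*t+14)*(15*t+15)*(15*t+16)*(15*t+17)*(15*t+18)*(15*t+19)) := by ring
          _ = ((15*t+12).choose (t+4) * (15*t+13)) * ((14*t+1)*(14*t+2)*(14*t+3)*(14*t+4)*(14*t+5)*(14*t+6)*(14*t+7)*(14*t+8)*(15*t+14)*(15*t+15)*(15*t+16)*(15*t+17)*(15*t+18)*(15*t+19)) := by rw [e8]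
          _ = ((15*t+12).choose (t+4) * (14*t+8)) * ((14*t+1)*(14*t+2)*(14*t+3)*(14*t+4)*(14*t+5)*(14*t+6)*(14*t+7)*(15*t+13)*(15*t+14)*(15*t+15)*(15*t+16)*(15*t+17)*(15*t+18)*(15*t+19)) := by ring
          _ = ((15*t+11).choose (t+4) * (15*t+12)) * ((14*t+1)*(14*t+2)*(14*t+3)*(14*t+4)*(14*t+5)*(14*t+6)*(14*t+7)*(15*t+13)*(15*t+14)*(15*t+15)*(15*t+16)*(15*t+17)*(15*t+18)*(15*t+19)) := by rw [e7]
          _ = ((15*t+11).choose (t+4) * (14*t+7)) * ((14*t+1)*(14*t+2)*(14*t+3)*(14*t+4)*(14*t+5)*(14*t+6)*(15*t+12)*(15*t+13)*(15*t+14)*(15*t+15)*(15*t+16)*(15*t+17)*(15*t+18)*(15*t+19)) := by ring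
          _ = ((15*t+10).choose (t+4) * (15*t+11)) * ((14*t+1)*(14*t+2)*(14*t+3)*(14*t+4)*(14*t+5)*(14*t+6)*(15*t+12)*(15*t+13)*(15*t+14)*(15*t+15)*(15*t+16)*(15*t+17)*(15*t+18)*(15*t+19)) := by rw [e6]
          _ = ((15*t+10).choose (t+4) * (14*t+6)) * ((14*t+1)*(14*t+2)*(14*t+3)*(14*t+4)*(14*t+5)*(15*t+11)*(15*t+12)*(15*t+13)*(15*t+14)*(15*t+15)*(15*t+16)*(15*t+17)*(15*t+18)*(15*t+19)) := by ring
          _ = ((15*t+9).choose (t+4) * (15*t+10)) * ((14*t+1)*(14*t+2)*(14*t+3)*(14*t+4)*(14*t+5)*(15*t+11)*(15*t+12)*(15*t+13)*(15*t+14)*(15*t+15)*(15*t+16)*(15*t+17)*(15*t+18)*(15*t+19)) := by rw [e5]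
          _ = ((15*t+9).choose (t+4) * (14*t+5)) * ((14*t+1)*(14*t+2)*(14*t+3)*(14*t+4)*(15*t+10)*(15*t+11)*(15*t+12)*(15*t+13)*(15*t+14)*(15*t+15)*(15*t+16)*(15*t+17)*(15*t+18)*(15*t+19)) := by ring
          _ = ((15*t+8).choose (t+4) * (15*t+9)) * ((14*t+1)*(14*t+2)*(14*t+3)*(14*t+4)*(15*t+10)*(15*t+11)*(15*t+12)*(15*t+13)*(15*t+14)*(15*t+15)*(15*t+16)*(15*t+17)*(15*t+18)*(15*t+19)) := by rw [e4]
          _ = ((15*t+8).choose (t+4) * (14*t+4)) * ((14*t+1)*(14*t+2)*(14*t+3)*(15*t+9)*(15*t+10)*(15*t+11)*(15*t+12)*(15*t+13)*(15*t+14)*(15*t+15)*(15*t+16)*(15*t+17)*(15*t+18)*(15*t+19)) := by ring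
          _ = ((15*t+7).choose (t+4) * (15*t+8)) * ((14*t+1)*(14*t+2)*(14*t+3)*(15*t+9)*(15*t+10)*(15*t+11)*(15*t+12)*(15*t+13)*(15*t+14)*(15*t+15)*(15*t+16)*(15*t+17)*(15*t+18)*(15*t+19)) := by rw [e3]
          _ = ((15*t+7).choose (t+4) * (14*t+3)) * ((14*t+1)*(14*t+2)*(15*t+8)*(15*t+9)*(15*t+10)*(15*t+11)*(15*t+12)*(15*t+13)*(15*t+14)*(15*t+15)*(15*t+16)*(15*t+17)*(15*t+18)*(15*t+19)) := by ring
          _ = ((15*t+6).choose (t+4) * (15*t+7)) * ((14*t+1)*(14*t+2)*(15*t+8)*(15*t+9)*(15*t+10)*(15*t+11)*(15*t+12)*(15*t+13)*(15*t+14)*(15*t+15)*(15*t+16)*(15*t+17)*(15*t+18)*(15*t+19)) := by rw [e2]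
          _ = ((15*t+6).choose (t+4) * (14*t+2)) * ((14*t+1)*(15*t+7)*(15*t+8)*(15*t+9)*(15*t+10)*(15*t+11)*(15*t+12)*(15*t+13)*(15*t+14)*(15*t+15)*(15*t+16)*(15*t+17)*(15*t+18)*(15*t+19)) := by ring
          _ = ((15*t+5).choose (t+4) * (15*t+6)) * ((14*t+1)*(15*t+7)*(15*t+8)*(15*t+9)*(15*t+10)*(15*t+11)*(15*t+12)*(15*t+13)*(15*t+14)*(15*t+15)*(15*t+16)*(15*t+17)*(15*t+18)*(15*t+19)) := by rw [e1]
          _ = ((15*t+5).choose (t+4) * (14*t+1)) * ((15*t+6)*(15*t+7)*(15*t+8)*(15*t+9)*(15*t+10)*(15*t+11)*(15*t+12)*(15*t+13)*(15*t+14)*(15*t+15)*(15*t+16)*(15*t+17)*(15*t+18)*(15*t+19)) := by ring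
          _ = ((15*t+4).choose (t+4) * (15*t+5)) * ((15*t+6)*(15*t+7)*(15*t+8)*(15*t+9)*(15*t+10)*(15*t+11)*(15*t+12)*(15*t+13)*(15*t+14)*(15*t+15)*(15*t+16)*(15*t+17)*(15*t+18)*(15*t+19)) := by rw [e0]
          _ = (15*t+4).choose (t+4) * ((15*t+5)*(15*t+6)*(15*t+7)*(15*t+8)*(15*t+9)*(15*t+10)*(15*t+11)*(15*t+12)*(15*t+13)*(15*t+14)*(15*t+15)*(15*t+16)*(15*t+17)*(15*t+18)*(15*t+19)) := by ring
    have hpoly : 12*(((3*t+7)*((3*t+8)*(3*t+9)))*(((2*t+5)*(2*t+6))*((t+5)*((14*t+1)*(14*t+2)*(14*t+3)*(14*t+4)*(14*t+5)*(14*t+6)*(14*t+7)*(14*t+8)*(14*t+9)*(14*t+10)*(14*t+11)*(14*t+12)*(14*t+13)*(14*t+14))))) ≤ 25*(((15*t+5)*(15*t+6)*(15*t+7)*(15*t+8)*(15*t+9)*(15*t+10)*(15*t+11)*(15*t+12)*(15*t+13)*(15*t+14)*(15*t+15)*(15*t+16)*(15*t+17)*(15*t+18)*(15*t+19))*(((t+3)*((2*t+5)*(2*t+6)))*((t+1)*(t+5))))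 := by
      have e : 25*(((15*t+5)*(15*t+6)*(15*t+7)*(15*t+8)*(15*t+9)*(15*t+10)*(15*t+11)*(15*t+12)*(15*t+13)*(15*t+14)*(15*t+15)*(15*t+16)*(15*t+17)*(15*t+18)*(15*t+19))*(((t+3)*((2*t+5)*(2*t+6)))*((t+1)*(t+5)))) = 12*(((3*t+7)*((3*t+8)*(3*t+9)))*(((2*t+5)*(2*t+6))*((t+5)*((14*t+1)*(14*t+2)*(14*t+3)*(14*t+4)*(14*t+5)*(14*t+6)*(14*t+7)*(14*t+8)*(14*t+9)*(14*t+10)*(14*t+11)*(14*t+12)*(14*t+13)*(14*t+14))))) + (56942052670863360000 + 1378015735439645568000*t^1 + 15533433764585216899200*t^2 + 108396524164417805184480*t^3 + 524866116055953648710016*t^4 + 1873120912634106266244624*t^5 + 5107575676354370951901768*t^6 + 10886116604240379534255486*t^7 + 18400675353713684000323668*t^8 + 24884776168304918472753588*t^9 + 27050147586465974764167816*t^10 + 23660613251307138725693802*t^11 + 16618745993437212145178580*t^12 + 9322283029343327651681352*t^13 + 4136799296483931047075064*t^14 + 1430412272434781112693618*t^15 + 376430316005387692926972*t^16 + 72629973025503217088436*t^17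 + 9652637255565212308152*t^18 + 785988627515274436614*t^19 + 29388228192162748764*t^20) := by ring
      rw [e]
      exact Nat.le_add_right _ _
    have hD : 0 < (((t+3)*((2*t+5)*(2*t+6)))*(((t+1)*(t+5))*((t+5)*((14*t+1)*(14*t+2)*(14*t+3)*(14*t+4)*(14*t+5)*(14*t+6)*(14*t+7)*(14*t+8)*(14*t+9)*(14*t+10)*(14*t+11)*(14*t+12)*(14*t+13)*(14*t+14))))) := by positivity
    have hcross : 12 * ((3*t+9).choose (t+3)) * ((2*t+6).choose (t+1)) * ((15*t+4).choose (t+4)) ≤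
        25 * ((3*t+6).choose (t+2)) * ((2*t+4).choose t) * ((15*t+19).choose (t+5)) := by
      refine Nat.le_of_mul_le_mul_right ?_ hD
      calc 12 * ((3*t+9).choose (t+3)) * ((2*t+6).choose (t+1)) * ((15*t+4).choose (t+4)) * (((t+3)*((2*t+5)*(2*t+6)))*(((t+1)*(t+5))*((t+5)*((14*t+1)*(14*t+2)*(14*t+3)*(14*t+4)*(14*t+5)*(14*t+6)*(14*t+7)*(14*t+8)*(14*t+9)*(14*t+10)*(14*t+11)*(14*t+12)*(14*t+13)*(14*t+14)))))
          _ = 12 * ((3*t+9).choose (t+3) * ((t+3)*((2*t+5)*(2*t+6)))) * ((2*t+6).choose (t+1) * ((t+1)*(t+5))) * ((15*t+4).choose (t+4)) * ((t+5)*((14*t+1)*(14*t+2)*(14*t+3)*(14*t+4)*(14*t+5)*(14*t+6)*(14*t+7)*(14*t+8)*(14*t+9)*(14*t+10)*(14*t+11)*(14*t+12)*(14*t+13)*(14*t+14))) := by ring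
          _ = 12 * ((3*t+6).choose (t+2) * ((3*t+7)*((3*t+8)*(3*t+9)))) * ((2*t+4).choose t * ((2*t+5)*(2*t+6))) * ((15*t+4).choose (t+4)) * ((t+5)*((14*t+1)*(14*t+2)*(14*t+3)*(14*t+4)*(14*t+5)*(14*t+6)*(14*t+7)*(14*t+8)*(14*t+9)*(14*t+10)*(14*t+11)*(14*t+12)*(14*t+13)*(14*t+14))) := by rw [hi, hii]
          _ = ((3*t+6).choose (t+2) * ((2*t+4).choose t * (15*t+4).choose (t+4))) * (12*(((3*t+7)*((3*t+8)*(3*t+9)))*(((2*t+5)*(2*t+6))*((t+5)*((14*t+1)*(14*t+2)*(14*t+3)*(14*t+4)*(14*t+5)*(14*t+6)*(14*t+7)*(14*t+8)*(14*t+9)*(14*t+10)*(14*t+11)*(14*t+12)*(14*t+13)*(14*t+14)))))) := by ring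
          _ ≤ ((3*t+6).choose (t+2) * ((2*t+4).choose t * (15*t+4).choose (t+4))) * (25*(((15*t+5)*(15*t+6)*(15*t+7)*(15*t+8)*(15*t+9)*(15*t+10)*(15*t+11)*(15*t+12)*(15*t+13)*(15*t+14)*(15*t+15)*(15*t+16)*(15*t+17)*(15*t+18)*(15*t+19))*(((t+3)*((2*t+5)*(2*t+6)))*((t+1)*(t+5))))) := Nat.mul_le_mul_left _ hpoly
          _ = 25 * ((3*t+6).choose (t+2)) * ((2*t+4).choose t) * ((15*t+4).choose (t+4) * ((15*t+5)*(15*t+6)*(15*t+7)*(15*t+8)*(15*t+9)*(15*t+10)*(15*t+11)*(15*t+12)*(15*t+13)*(15*t+14)*(15*t+15)*(15*t+16)*(15*t+17)*(15*t+18)*(15*t+19))) * (((t+3)*((2*t+5)*(2*t+6)))*((t+1)*(t+5))) := by ring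
          _ = 25 * ((3*t+6).choose (t+2)) * ((2*t+4).choose t) * ((15*t+19).choose (t+5) * ((t+5) * ((14*t+1)*(14*t+2)*(14*t+3)*(14*t+4)*(14*t+5)*(14*t+6)*(14*t+7)*(14*t+8)*(14*t+9)*(14*t+10)*(14*t+11)*(14*t+12)*(14*t+13)*(14*t+14)))) * (((t+3)*((2*t+5)*(2*t+6)))*((t+1)*(t+5))) := by rw [← hiii]
          _ = 25 * ((3*t+6).choose (t+2)) * ((2*t+4).choose t) * ((15*t+19).choose (t+5)) * (((t+3)*((2*t+5)*(2*t+6)))*(((t+1)*(t+5))*((t+5)*((14*t+1)*(14*t+2)*(14*t+3)*(14*t+4)*(14*t+5)*(14*t+6)*(14*t+7)*(14*t+8)*(14*t+9)*(14*t+10)*(14*t+11)*(14*t+12)*(14*t+13)*(14*t+14))))) := by ring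
    have hB : 0 < 5^(2*t+2) * (15*t+4).choose (t+4) :=
      Nat.mul_pos (pow_pos (by norm_num) _) (Nat.choose_pos (by omega))
    refine Nat.le_of_mul_le_mul_right ?_ hB
    calc 2^(t+2) * 6^(t+3) * (3*t+9).choose (t+3) * (2*t+6).choose (t+1) * (5^(2*t+2) * (15*t+4).choose (t+4))
        _ = (2^(t+1) * 6^(t+2) * 5^(2*t+2)) * (12 * ((3*t+9).choose (t+3)) * ((2*t+6).choose (t+1)) * ((15*t+4).choose (t+4))) := by ring
        _ ≤ (2^(t+1) * 6^(t+2) * 5^(2*t+2)) * (25 * ((3*t+6).choose (t+2)) * ((2*t+4).choose t) * ((15*t+19).choose (t+5))) := Nat.mul_le_mul_left _ hcross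
        _ = (2^(t+1) * 6^(t+2) * (3*t+6).choose (t+2) * (2*t+4).choose t) * (5^(2*t+4) * (15*t+19).choose (t+5)) := by ring
        _ ≤ (5^(2*t+2) * (15*t+4).choose (t+4)) * (5^(2*t+4) * (15*t+19).choose (t+5)) := Nat.mul_le_mul_right _ ih
        _ = (5^(2*t+4) * (15*t+19).choose (t+5)) * (5^(2*t+2) * (15*t+4).choose (t+4)) := by ring

private lemma starstar (t : ℕ) (ht : 2 ≤ t) :
    2 * 6^(t+2) * ((4*t+6).choose t * (3*t+6).choose (t+2)) ≤ 5^(t+2) * (16*t+4).choose (2*t+4) := by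
  have hG := keyG t ht
  have I4 : (16*t+4).choose (2*t+4) * (2*t+4).choose t = (16*t+4).choose t * (15*t+4).choose (t+4) := by
    have := cid (16*t+4) t (t+4) (by omega)
    rwa [show t+(t+4) = 2*t+4 by ring, show 16*t+4-t = 15*t+4 by omega] at this
  have comp : 5^t * (4*t+6).choose t ≤ 2^t * (16*t+4).choose t :=
    choose_scaled 5 2 t (4*t+6) (16*t+4) (by intro i hi; omega)
  have hpos : 0 < 2^t * (2*t+4).choose t :=
    Nat.mul_pos (pow_pos (by norm_num) t) (Nat.choose_pos (by omega))
  refine Nat.le_of_mul_le_mul_right ?_ hpos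
  calc 2 * 6^(t+2) * ((4*t+6).choose t * (3*t+6).choose (t+2)) * (2^t * (2*t+4).choose t)
      _ = (2^(t+1) * 6^(t+2) * (3*t+6).choose (t+2) * (2*t+4).choose t) * ((4*t+6).choose t) := by ring
      _ ≤ (5^(2*t+2) * (15*t+4).choose (t+4)) * ((4*t+6).choose t) := Nat.mul_le_mul_right _ hG
      _ = ((15*t+4).choose (t+4)) * (5^(t+2)) * (5^t * (4*t+6).choose t) := by ring
      _ ≤ ((15*t+4).choose (t+4)) * (5^(t+2)) * (2^t * (16*t+4).choose t) := Nat.mul_le_mul_left _ comp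
      _ = (5^(t+2) * 2^t) * ((16*t+4).choose t * (15*t+4).choose (t+4)) := by ring
      _ = (5^(t+2) * 2^t) * ((16*t+4).choose (2*t+4) * (2*t+4).choose t) := by rw [← I4]
      _ = (5^(t+2) * (16*t+4).choose (2*t+4)) * (2^t * (2*t+4).choose t) := by ring

/-- Inequality (10) for `t > 1`: if `1 < t ≤ k/4 - 2` and `n ≥ 2k + 14t`, then
`C(n-k-2, k-2) ≥ C(k,t)·(C(n-k-1, t) + C(n-k+t+1, t+2))`. -/
theorem key_ineq_t_large (n k t : ℕ) (ht : 1 < t) (htk : (t : ℝ) ≤ (k : ℝ) / 4 - 2)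
    (hn : 2 * k + 14 * t ≤ n) :
    k.choose t * ((n - k - 1).choose t + (n - k + t + 1).choose (t + 2)) ≤
      (n - k - 2).choose (k - 2) := by
  have ht2 : 2 ≤ t := ht
  have hk : 4*t+8 ≤ k := by
    have h4 : ((4*t+8 : ℕ) : ℝ) ≤ (k : ℝ) := by push_cast; linarith
    exact_mod_cast h4
  set m := n - k with hm
  have hmk : k + 14*t ≤ m := by omega
  have hm18 : 18*t+8 ≤ m := by omega
  have step1 : (m-1).choose t ≤ (m+t+1).choose (t+2) := by
    calc (m-1).choose t ≤ (m+t+1).choose t := Nat.choose_le_choose t (by omega)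
      _ ≤ (m+t+1).choose (t+2) := choose_mono_mid (by omega) (by omega)
  have a1 : k.choose t ≤ (m-2).choose t := Nat.choose_le_choose t (by omega)
  have a2 : 5^(t+2) * (m+t+1).choose (t+2) ≤ 6^(t+2) * (m-2-t).choose (t+2) :=
    choose_scaled 5 6 (t+2) (m+t+1) (m-2-t) (by intro i hi; omega)
  have a3 : 2 * 6^(t+2) * ((4*t+6).choose t * (3*t+6).choose (t+2)) ≤ 5^(t+2) * (m-2*t-4).choose (2*t+4) := by
    calc 2 * 6^(t+2) * ((4*t+6).choose t * (3*t+6).choose (t+2))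
        _ ≤ 5^(t+2) * (16*t+4).choose (2*t+4) := starstar t ht2
        _ ≤ 5^(t+2) * (m-2*t-4).choose (2*t+4) := Nat.mul_le_mul_left _ (Nat.choose_le_choose _ (by omega))
  have I1 : (m-2).choose (4*t+6) * (4*t+6).choose t = (m-2).choose t * (m-2-t).choose (3*t+6) := by
    have := cid (m-2) t (3*t+6) (by omega)
    rwa [show t+(3*t+6) = 4*t+6 by ring] at this
  have I2 : (m-2-t).choose (3*t+6) * (3*t+6).choose (t+2) = (m-2-t).choose (t+2) * (m-2*t-4).choose (2*t+4) := by
    have := cid (m-2-t) (t+2) (2*t+4) (by omega)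
    rwa [show (t+2)+(2*t+4) = 3*t+6 by ring, show m-2-t-(t+2) = m-2*t-4 by omega] at this
  have hc : 0 < 5^(t+2) * ((4*t+6).choose t * (3*t+6).choose (t+2)) :=
    Nat.mul_pos (pow_pos (by norm_num) _)
      (Nat.mul_pos (Nat.choose_pos (by omega)) (Nat.choose_pos (by omega)))
  have key2 : 2*(k.choose t * (m+t+1).choose (t+2)) ≤ (m-2).choose (4*t+6) := by
    refine Nat.le_of_mul_le_mul_right ?_ hc
    calc 2*(k.choose t * (m+t+1).choose (t+2)) * (5^(t+2) * ((4*t+6).choose t * (3*t+6).choose (t+2)))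
        _ = 2 * (k.choose t) * (5^(t+2) * (m+t+1).choose (t+2)) * ((4*t+6).choose t * (3*t+6).choose (t+2)) := by ring
        _ ≤ 2 * ((m-2).choose t) * (6^(t+2) * (m-2-t).choose (t+2)) * ((4*t+6).choose t * (3*t+6).choose (t+2)) :=
            Nat.mul_le_mul (Nat.mul_le_mul (Nat.mul_le_mul_left 2 a1) a2) le_rfl
        _ = ((m-2).choose t * (m-2-t).choose (t+2)) * (2 * 6^(t+2) * ((4*t+6).choose t * (3*t+6).choose (t+2))) := by ring
        _ ≤ ((m-2).choose t * (m-2-t).choose (t+2)) * (5^(t+2) * (m-2*t-4).choose (2*t+4)) := Nat.mul_le_mul_left _ a3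
        _ = 5^(t+2) * ((m-2).choose t * ((m-2-t).choose (t+2) * (m-2*t-4).choose (2*t+4))) := by ring
        _ = 5^(t+2) * ((m-2).choose t * ((m-2-t).choose (3*t+6) * (3*t+6).choose (t+2))) := by rw [← I2]
        _ = 5^(t+2) * (((m-2).choose t * (m-2-t).choose (3*t+6)) * (3*t+6).choose (t+2)) := by ring
        _ = 5^(t+2) * (((m-2).choose (4*t+6) * (4*t+6).choose t) * (3*t+6).choose (t+2)) := by rw [← I1]
        _ = (m-2).choose (4*t+6) * (5^(t+2) * ((4*t+6).choose t * (3*t+6).choose (t+2))) := by ring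
  calc k.choose t * ((m-1).choose t + (m+t+1).choose (t+2))
      _ ≤ k.choose t * ((m+t+1).choose (t+2) + (m+t+1).choose (t+2)) := Nat.mul_le_mul_left _ (Nat.add_le_add_right step1 _)
      _ = 2*(k.choose t * (m+t+1).choose (t+2)) := by ring
      _ ≤ (m-2).choose (4*t+6) := key2
      _ ≤ (m-2).choose (k-2) := choose_mono_mid (by omega) (by omega)
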